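/- There exist disjoint computably enumerable sets X, Y ⊆ ℕ that are computably inseparable: there is no computable set S with X ⊆ S and Y ⊆ ℕ \ S. -/

import Mathlib

open Nat.Partrec (Code)
open Nat.Partrec.Code

private noncomputable def diagF (b : ℕ) : ℕ →. ℕ := fun n =>
  (eval (Denumerable.ofNat Code n) n).bind fun v => bif v = b then Part.some 0 else Part.none

private theorem diagF_partrec (b : ℕ) : Nat.Partrec (diagF b) := by
  apply Partrec.nat_iff.1
  exact (eval_part.comp (Computable.ofNat Code) Computable.id).bind
    ((Partrec.cond ((Primrec.eq.comp Primrec.snd (Primrec.const b)).decide.to_comp)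
      (Computable.const 0).partrec Partrec.none))

private theorem diagF_dom {b : ℕ} {n : ℕ} :
    (diagF b n).Dom ↔ b ∈ eval (Denumerable.ofNat Code n) n := by
  constructor
  · intro h
    obtain ⟨v, hv⟩ := Part.dom_iff_mem.1 h
    simp only [diagF, Part.mem_bind_iff] at hv
    obtain ⟨a, ha, hv2⟩ := hv
    by_cases h' : a = b
    · exact h' ▸ ha
    · simp [h'] at hv2
  · intro hb
    exact Part.dom_iff_mem.2 ⟨0, Part.mem_bind_iff.2 ⟨b, hb, by simp⟩⟩

/-- There exist disjoint computably enumerable sets `X, Y ⊆ ℕ` that are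
computably inseparable: no computable set `S` satisfies `X ⊆ S` and
`Y ⊆ ℕ \ S`.  A set is c.e. if it is the domain of a partial computable
function, and computable if its characteristic function is computable. -/
theorem computably_inseparable_ce_sets :
    ∃ X Y : Set ℕ,
      (∃ f : ℕ →. ℕ, Nat.Partrec f ∧ X = {n | (f n).Dom}) ∧
      (∃ f : ℕ →. ℕ, Nat.Partrec f ∧ Y = {n | (f n).Dom}) ∧
      Disjoint X Y ∧
      ¬ ∃ g : ℕ → Bool, Computable g ∧
          X ⊆ {n | g n = true} ∧ Y ⊆ {n | g n = false} := by
  refine ⟨{n | (diagF 0 n).Dom}, {n | (diagF 1 n).Dom},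
    ⟨diagF 0, diagF_partrec 0, rfl⟩, ⟨diagF 1, diagF_partrec 1, rfl⟩, ?_, ?_⟩
  · rw [Set.disjoint_left]
    intro n h0 h1
    have h0' := diagF_dom.1 h0
    have h1' := diagF_dom.1 h1
    exact absurd (Part.mem_unique h0' h1') (by norm_num)
  · rintro ⟨g, hg, hX, hY⟩
    set h : ℕ →. ℕ := fun n => Part.some (cond (g n) 1 0) with hh
    have hpr : Nat.Partrec h :=
      Partrec.nat_iff.1 ((Computable.cond hg (Computable.const 1) (Computable.const 0)).partrec)
    obtain ⟨c, hc⟩ := exists_code.1 hpr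
    set e := Encodable.encode c with he
    have hce : Denumerable.ofNat Code e = c := Denumerable.ofNat_encode c
    have heval : eval (Denumerable.ofNat Code e) e = Part.some (cond (g e) 1 0) := by
      rw [hce, hc]
    cases hge : g e with
    | true =>
      have : e ∈ {n | (diagF 1 n).Dom} := diagF_dom.2 (by rw [heval, hge]; simp)
      have := hY this
      simp [hge] at this
    | false =>
      have : e ∈ {n | (diagF 0 n).Dom} := diagF_dom.2 (by rw [heval, hge]; simp)
      have := hX this
      simp [hge] at this
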